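/- For every nonzero F ∈ ℕ^5 we have (√2)^{F^(1)·F^(2)·F^(3)·F^(4)·F^(5)} ≤ N(F). -/

import Mathlib

open Finset

/-- A generalized numerical semigroup (GNS) in `ℕ^d`: contains `0`, is closed under
componentwise addition, and has finite complement. -/
def IsGNS {d : ℕ} (S : Set (Fin d → ℕ)) : Prop :=
  (0 : Fin d → ℕ) ∈ S ∧ (∀ a ∈ S, ∀ b ∈ S, a + b ∈ S) ∧ Sᶜ.Finite

/-- A relaxed monomial order on `ℕ^d`: a (strict) total order `r` such that
`r v w → r v (w + u)` and `0` is below every nonzero element. -/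
def IsRMO {d : ℕ} (r : (Fin d → ℕ) → (Fin d → ℕ) → Prop) : Prop :=
  IsStrictTotalOrder (Fin d → ℕ) r ∧
  (∀ v w u : Fin d → ℕ, r v w → r v (w + u)) ∧
  (∀ v : Fin d → ℕ, v ≠ 0 → r 0 v)

/-- `F` is the Frobenius gap of `S` with respect to the order `r`, i.e. the
`r`-maximum of the gap set `ℕ^d \ S`. -/
def IsFrobGapWrt {d : ℕ} (S : Set (Fin d → ℕ))
    (r : (Fin d → ℕ) → (Fin d → ℕ) → Prop) (F : Fin d → ℕ) : Prop :=
  F ∉ S ∧ ∀ x, x ∉ S → x ≠ F → r x F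

/-- `F` is a Frobenius allowable gap of `S`: it is the Frobenius gap with respect to
some relaxed monomial order. -/
def FrobAllowable {d : ℕ} (S : Set (Fin d → ℕ)) (F : Fin d → ℕ) : Prop :=
  ∃ r, IsRMO r ∧ IsFrobGapWrt S r F

/-- `F` is a maximal gap of `S` with respect to the natural (componentwise)
partial order on `ℕ^d`. -/
def MaxGap {d : ℕ} (S : Set (Fin d → ℕ)) (F : Fin d → ℕ) : Prop :=
  F ∉ S ∧ ∀ x, x ∉ S → F ≤ x → x = F

/-- The set of Frobenius allowable gaps of `S`, i.e. the maximal elements of the gap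
set under the natural partial order. -/
def FA {d : ℕ} (S : Set (Fin d → ℕ)) : Set (Fin d → ℕ) := {F | MaxGap S F}

/-- The set of pseudo-Frobenius gaps of `S`. -/
def PF {d : ℕ} (S : Set (Fin d → ℕ)) : Set (Fin d → ℕ) :=
  {P | P ∉ S ∧ ∀ s ∈ S, s ≠ 0 → P + s ∈ S}

/-- `S` is quasi-irreducible: for every gap `x`, either `2x` is Frobenius allowable or
`F - x ∈ S` for some Frobenius allowable gap `F`. -/
def QuasiIrreducible {d : ℕ} (S : Set (Fin d → ℕ)) : Prop :=
  ∀ x, x ∉ S → (x + x ∈ FA S ∨ ∃ F ∈ FA S, ∃ s ∈ S, x + s = F)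

/-- `S` is a Frobenius GNS with Frobenius gap `F`: the gap set has `F` as its unique
maximal element under the natural partial order. -/
def IsFrobeniusGNS {d : ℕ} (S : Set (Fin d → ℕ)) (F : Fin d → ℕ) : Prop :=
  IsGNS S ∧ MaxGap S F ∧ ∀ x, MaxGap S x → x = F

/-- `‖F‖ = ∏ i (F^(i) + 1)`, the number of lattice points in the box `[0, F]`. -/
def normF {d : ℕ} (F : Fin d → ℕ) : ℕ := ∏ i, (F i + 1)

/-- `N(F)`: the number of Frobenius GNS in `ℕ^d` with Frobenius gap `F`. -/
noncomputable def NF {d : ℕ} (F : Fin d → ℕ) : ℕ :=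
  {S : Set (Fin d → ℕ) | IsFrobeniusGNS S F}.ncard

namespace LBD5

variable (F : Fin 5 → ℕ)

/-- the upper-half box -/
def Hbox : Finset (Fin 5 → ℕ) :=
  Fintype.piFinset ![Finset.Ioc (F 0 / 2) (F 0), Finset.range (F 1 + 1),
    Finset.range (F 2 + 1), Finset.range (F 3 + 1), Finset.range (F 4 + 1)]

lemma mem_Hbox {x : Fin 5 → ℕ} (hx : x ∈ Hbox F) :
    x ≤ F ∧ F 0 < 2 * x 0 ∧ x ≠ 0 := by
  rw [Hbox, Fintype.mem_piFinset] at hx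
  have h0 := hx 0
  have h1 := hx 1
  have h2 := hx 2
  have h3 := hx 3
  have h4 := hx 4
  simp only [Matrix.cons_val_zero, Matrix.cons_val_one, Matrix.head_cons,
    Matrix.cons_val_two, Matrix.tail_cons, Matrix.cons_val_three, Matrix.cons_val_four,
    Finset.mem_Ioc, Finset.mem_range] at h0 h1 h2 h3 h4
  refine ⟨?_, by omega, ?_⟩
  · intro i
    fin_cases i <;> simp <;> omega
  · intro h
    have : x 0 = 0 := by rw [h]; rfl
    omega

def SA (A : Finset (Fin 5 → ℕ)) : Set (Fin 5 → ℕ) :=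
  {x | x = 0 ∨ x ∈ A ∨ ¬ x ≤ F}

lemma not_mem_SA {A : Finset (Fin 5 → ℕ)} {x : Fin 5 → ℕ} (hx : x ∉ SA F A) :
    x ≠ 0 ∧ x ∉ A ∧ x ≤ F := by
  simp only [SA, Set.mem_setOf_eq, not_or, not_not] at hx
  exact hx

lemma frob (hF : F ≠ 0) (A : Finset (Fin 5 → ℕ)) (hA : A ⊆ (Hbox F).erase F) :
    IsFrobeniusGNS (SA F A) F := by
  have hAprop : ∀ x ∈ A, x ≤ F ∧ F 0 < 2 * x 0 ∧ x ≠ 0 := fun x hx =>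
    mem_Hbox F (Finset.mem_of_mem_erase (hA hx))
  have hFA : F ∉ A := fun h => (Finset.ne_of_mem_erase (hA h)) rfl
  have hFnot : F ∉ SA F A := by
    simp only [SA, Set.mem_setOf_eq, not_or, not_not]
    exact ⟨hF, hFA, le_refl F⟩
  refine ⟨⟨Or.inl rfl, ?_, ?_⟩, ⟨hFnot, ?_⟩, ?_⟩
  · -- closure under addition
    rintro a (rfl | ha) b hb
    · simpa using hb
    rcases hb with (rfl | hb)
    · rw [add_zero]; exact Or.inr ha
    · refine Or.inr (Or.inr ?_)
      rcases ha with ha | ha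
      · rcases hb with hb | hb
        · -- both in A : first coordinate too big
          obtain ⟨-, ha2, -⟩ := hAprop a ha
          obtain ⟨-, hb2, -⟩ := hAprop b hb
          intro hle
          have := Pi.le_def.mp hle 0
          simp only [Pi.add_apply] at this
          omega
        · intro hle
          rw [Pi.le_def] at hb
          push_neg at hb
          obtain ⟨i, hi⟩ := hb
          have := Pi.le_def.mp hle i
          simp only [Pi.add_apply] at this
          omega
      · intro hle
        rw [Pi.le_def] at ha
        push_neg at ha
        obtain ⟨i, hi⟩ := ha
        have := Pi.le_def.mp hle i
        simp only [Pi.add_apply] at this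
        omega
  · -- finite complement
    apply (Set.finite_Icc (0 : Fin 5 → ℕ) F).subset
    intro x hx
    exact Set.mem_Icc.2 ⟨zero_le, (not_mem_SA F hx).2.2⟩
  · -- maximality of F
    intro x hx hFx
    exact le_antisymm ((not_mem_SA F hx).2.2) hFx
  · -- uniqueness
    rintro x ⟨hx, hmax⟩
    exact (hmax F hFnot (not_mem_SA F hx).2.2).symm

lemma gaps_le {S : Set (Fin 5 → ℕ)} {G : Fin 5 → ℕ} (h : IsFrobeniusGNS S G)
    {x : Fin 5 → ℕ} (hx : x ∉ S) : x ≤ G := by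
  obtain ⟨⟨-, -, hfin⟩, -, huniq⟩ := h
  have hGfin : (Sᶜ ∩ {y | x ≤ y}).Finite := hfin.inter_of_left _
  obtain ⟨m, hm, hmax'⟩ : ∃ m ∈ Sᶜ ∩ {y | x ≤ y}, ∀ y ∈ Sᶜ ∩ {y | x ≤ y}, m ≤ y → m = y := by
    obtain ⟨m, hm⟩ := hGfin.exists_maximal ⟨x, hx, le_refl x⟩
    exact ⟨m, hm.1, fun y hy hmy => le_antisymm hmy (hm.2 hy hmy)⟩
  have hMG : MaxGap S m :=
    ⟨hm.1, fun y hy hmy => (hmax' y ⟨hy, le_trans hm.2 hmy⟩ hmy).symm⟩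
  have := huniq m hMG
  exact this ▸ hm.2

lemma finite_family : {S : Set (Fin 5 → ℕ) | IsFrobeniusGNS S F}.Finite := by
  have hbox : {G : Set (Fin 5 → ℕ) | G ⊆ Set.Icc 0 F}.Finite :=
    (Set.finite_Icc (0 : Fin 5 → ℕ) F).finite_subsets
  apply Set.Finite.of_finite_image (f := compl) (hbox.subset ?_)
    (fun a _ b _ h => compl_injective h)
  rintro G ⟨S, hS, rfl⟩
  intro x hx
  exact Set.mem_Icc.2 ⟨zero_le, gaps_le hS hx⟩

lemma two_pow_le (hF : F ≠ 0) : 2 ^ ((Hbox F).erase F).card ≤ NF F := by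
  classical
  set T : Finset (Set (Fin 5 → ℕ)) := ((Hbox F).erase F).powerset.image (SA F) with hT
  have hinj : Set.InjOn (SA F) ((Hbox F).erase F).powerset := by
    intro A hA B hB hAB
    simp only [Finset.coe_powerset, Set.mem_preimage, Set.mem_powerset_iff,
      Finset.coe_subset, Finset.mem_coe, Finset.mem_powerset] at hA hB
    ext x
    constructor <;> intro hx
    · have hxp := mem_Hbox F (Finset.mem_of_mem_erase (hA hx))
      have : x ∈ SA F B := hAB ▸ (Or.inr (Or.inl hx) : x ∈ SA F A)
      rcases this with h | h | h
      · exact absurd h hxp.2.2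
      · exact h
      · exact absurd hxp.1 h
    · have hxp := mem_Hbox F (Finset.mem_of_mem_erase (hB hx))
      have : x ∈ SA F A := hAB ▸ (Or.inr (Or.inl hx) : x ∈ SA F B)
      rcases this with h | h | h
      · exact absurd h hxp.2.2
      · exact h
      · exact absurd hxp.1 h
  have hcard : T.card = 2 ^ ((Hbox F).erase F).card := by
    rw [hT, Finset.card_image_of_injOn hinj, Finset.card_powerset]
  have hsub : (T : Set (Set (Fin 5 → ℕ))) ⊆ {S | IsFrobeniusGNS S F} := by
    intro S hS
    simp only [hT, Finset.coe_image, Set.mem_image, Finset.mem_coe,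
      Finset.mem_powerset] at hS
    obtain ⟨A, hA, rfl⟩ := hS
    exact frob F hF A hA
  calc 2 ^ ((Hbox F).erase F).card = T.card := hcard.symm
    _ = (T : Set (Set (Fin 5 → ℕ))).ncard := (Set.ncard_coe_finset T).symm
    _ ≤ NF F := Set.ncard_le_ncard hsub (finite_family F)

lemma card_Hbox : (Hbox F).card =
    (F 0 - F 0 / 2) * ((F 1 + 1) * ((F 2 + 1) * ((F 3 + 1) * (F 4 + 1)))) := by
  rw [Hbox, Fintype.card_piFinset, Fin.prod_univ_five]
  simp [Nat.card_Ioc]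
  ring

lemma prod_le (h1 : ∀ i, 1 ≤ F i) : (∏ i, F i) ≤ 2 * ((Hbox F).erase F).card := by
  have hFmem : F ∈ Hbox F := by
    rw [Hbox, Fintype.mem_piFinset]
    intro i
    have := h1 0; have := h1 1; have := h1 2; have := h1 3; have := h1 4
    fin_cases i <;> simp <;> omega
  rw [Finset.card_erase_of_mem hFmem, card_Hbox, Fin.prod_univ_five]
  have ha := h1 0; have hb := h1 1; have hc := h1 2; have hd := h1 3; have he := h1 4
  set a := F 0; set b := F 1; set c := F 2; set d := F 3; set e := F 4
  have h2 : a ≤ 2 * (a - a / 2) := by omega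
  have k1 : d * e + 2 ≤ (d + 1) * (e + 1) := by
    have : (d + 1) * (e + 1) = d * e + d + e + 1 := by ring
    omega
  have k2 : c * (d * e) + 2 ≤ (c + 1) * ((d + 1) * (e + 1)) :=
    calc c * (d * e) + 2 ≤ (c + 1) * (d * e + 2) := by
          have : (c + 1) * (d * e + 2) = c * (d * e) + 2 * c + d * e + 2 := by ring
          omega
      _ ≤ (c + 1) * ((d + 1) * (e + 1)) := Nat.mul_le_mul_left _ k1
  have k3 : b * (c * (d * e)) + 2 ≤ (b + 1) * ((c + 1) * ((d + 1) * (e + 1))) :=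
    calc b * (c * (d * e)) + 2 ≤ (b + 1) * (c * (d * e) + 2) := by
          have : (b + 1) * (c * (d * e) + 2) = b * (c * (d * e)) + 2 * b + c * (d * e) + 2 := by
            ring
          omega
      _ ≤ (b + 1) * ((c + 1) * ((d + 1) * (e + 1))) := Nat.mul_le_mul_left _ k2
  have hstep : a * b * c * d * e + 2 ≤
      a * ((b + 1) * ((c + 1) * ((d + 1) * (e + 1)))) :=
    calc a * b * c * d * e + 2 ≤ a * (b * (c * (d * e)) + 2) := by
          have h' : a * (b * (c * (d * e)) + 2) = a * b * c * d * e + 2 * a := by ring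
          omega
      _ ≤ a * ((b + 1) * ((c + 1) * ((d + 1) * (e + 1)))) := Nat.mul_le_mul_left _ k3
  have hstep2 : a * ((b + 1) * ((c + 1) * ((d + 1) * (e + 1)))) ≤
      2 * ((a - a / 2) * ((b + 1) * ((c + 1) * ((d + 1) * (e + 1))))) :=
    calc a * ((b + 1) * ((c + 1) * ((d + 1) * (e + 1)))) ≤
        2 * (a - a / 2) * ((b + 1) * ((c + 1) * ((d + 1) * (e + 1)))) :=
          Nat.mul_le_mul_right _ h2
      _ = 2 * ((a - a / 2) * ((b + 1) * ((c + 1) * ((d + 1) * (e + 1))))) := by ring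
  omega

end LBD5

/-- For every nonzero `F ∈ ℕ^5`, `(√2)^{F⁽¹⁾F⁽²⁾F⁽³⁾F⁽⁴⁾F⁽⁵⁾} ≤ N(F)`. -/
theorem lower_bound_dim_five (F : Fin 5 → ℕ) (hF : F ≠ 0) :
    Real.sqrt 2 ^ (∏ i, F i) ≤ (NF F : ℝ) := by
  set K := ((LBD5.Hbox F).erase F).card with hK
  have hNF : 2 ^ K ≤ NF F := LBD5.two_pow_le F hF
  have hPK : (∏ i, F i) ≤ 2 * K := by
    by_cases h1 : ∀ i, 1 ≤ F i
    · exact LBD5.prod_le F h1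
    · push_neg at h1
      obtain ⟨i, hi⟩ := h1
      have : F i = 0 := by omega
      rw [Finset.prod_eq_zero (Finset.mem_univ i) this]
      exact Nat.zero_le _
  have hs1 : (1 : ℝ) ≤ Real.sqrt 2 := by
    rw [show (1 : ℝ) = Real.sqrt 1 from (Real.sqrt_one).symm]
    exact Real.sqrt_le_sqrt (by norm_num)
  calc Real.sqrt 2 ^ (∏ i, F i) ≤ Real.sqrt 2 ^ (2 * K) := by
        exact pow_le_pow_right₀ hs1 hPK
    _ = (2 : ℝ) ^ K := by
        rw [pow_mul, Real.sq_sqrt (by norm_num : (0:ℝ) ≤ 2)]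
    _ ≤ (NF F : ℝ) := by exact_mod_cast hNF
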